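/- Let G be a totally disconnected, locally compact strongly topological gyrogroup. Then every neighborhood of the identity contains a compact open L-subgyrogroup. -/
import Mathlib


open Set Topology

universe u

class Gyrogroup (G : Type u) where
  op : G → G → G
  one : G
  inv : G → G
  gyr : G → G → G ≃ G
  one_op : ∀ g, op one g = g
  op_one : ∀ g, op g one = g
  inv_op : ∀ g, op (inv g) g = one
  op_inv : ∀ g, op g (inv g) = one
  unique_one : ∀ e : G, (∀ g, op e g = g ∧ op g e = g) → e = one
  unique_inv : ∀ g h : G, (op h g = one ∧ op g h = one) → h = inv g
  gyr_op : ∀ g h f, op g (op h f) = op (op g h) (gyr g h f)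
  gyr_hom : ∀ g h a b, gyr g h (op a b) = op (gyr g h a) (gyr g h b)
  loop : ∀ g h, gyr g h = gyr (op g h) h

namespace Gyrogroup

variable {G : Type u} [Gyrogroup G]

/-- `H` is a subgyrogroup: nonempty and a gyrogroup under the restricted operations. -/
def IsSubgyrogroup (H : Set G) : Prop :=
  H.Nonempty ∧ one ∈ H ∧
  (∀ a ∈ H, ∀ b ∈ H, op a b ∈ H) ∧
  (∀ a ∈ H, inv a ∈ H) ∧
  (∀ a ∈ H, ∀ b ∈ H, Set.BijOn (gyr a b) H H)

/-- `H` is an L-subgyrogroup: `gyr g h` fixes `H` setwise for every `g ∈ G`, `h ∈ H`. -/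
def IsLSubgyrogroup (H : Set G) : Prop :=
  IsSubgyrogroup H ∧ ∀ g : G, ∀ h ∈ H, (gyr g h) '' H = H

def leftCoset (a : G) (H : Set G) : Set G := (fun h => op a h) '' H

/-- The subgyrogroup generated by `S`. -/
def generatedSubgyrogroup (S : Set G) : Set G :=
  ⋂₀ {H : Set G | IsSubgyrogroup H ∧ S ⊆ H}

/-- The gyrogroup operations are continuous (topological gyrogroup). -/
def ContinuousGyroOps (G : Type u) [Gyrogroup G] [TopologicalSpace G] : Prop :=
  Continuous (fun p : G × G => op p.1 p.2) ∧ Continuous (inv : G → G)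

/-- The topology coincides with the order topology of some linear order. -/
def TopologicallyOrderable (G : Type u) [t : TopologicalSpace G] : Prop :=
  ∃ l : LinearOrder G, t = TopologicalSpace.generateFrom
      {s : Set G | ∃ a : G, s = {x | l.lt a x} ∨ s = {x | l.lt x a}}

/-- A strongly topological gyrogroup: a topological gyrogroup with a neighborhood base
at `1` whose members are invariant under all gyroautomorphisms. -/
def StronglyTopologicalGyrogroup (G : Type u) [Gyrogroup G] [TopologicalSpace G] : Prop :=
  ContinuousGyroOps G ∧
  ∃ 𝒰 : Set (Set G), (∀ U ∈ 𝒰, U ∈ nhds (one : G)) ∧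
    (∀ V ∈ nhds (one : G), ∃ U ∈ 𝒰, U ⊆ V) ∧
    (∀ U ∈ 𝒰, ∀ x y : G, (gyr x y) '' U = U)

def StronglyTopologicallyOrderable (G : Type u) [Gyrogroup G] [TopologicalSpace G] : Prop :=
  StronglyTopologicalGyrogroup G ∧ TopologicallyOrderable G

end Gyrogroup

namespace Gyrogroup

variable {G : Type u} [Gyrogroup G]

theorem g_op_left_cancel (a : G) {x y : G} (h : op a x = op a y) : x = y := by
  have hx : op (inv a) (op a x) = op (inv a) (op a y) := by rw [h]
  rw [gyr_op, gyr_op, inv_op, one_op, one_op] at hx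
  exact (gyr (inv a) a).injective hx

theorem g_gyr_one_left (b c : G) : gyr one b c = c := by
  apply g_op_left_cancel b
  have h := gyr_op (one : G) b c
  rw [one_op, one_op] at h
  exact h.symm

theorem g_gyr_inv_self (a c : G) : gyr (inv a) a c = c := by
  have h := loop (inv a : G) a
  rw [inv_op] at h
  rw [h, g_gyr_one_left]

theorem g_gyr_self_inv (a c : G) : gyr a (inv a) c = c := by
  have h := loop a (inv a : G)
  rw [op_inv] at h
  rw [h, g_gyr_one_left]

theorem g_inv_op_cancel (a x : G) : op (inv a) (op a x) = x := by
  rw [gyr_op, inv_op, one_op, g_gyr_inv_self]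

theorem g_op_inv_cancel (a x : G) : op a (op (inv a) x) = x := by
  rw [gyr_op, op_inv, one_op, g_gyr_self_inv]

theorem g_eq_inv_of_op_eq_one {a b : G} (h : op a b = one) : b = inv a := by
  have h2 := g_inv_op_cancel a b
  rw [h, op_one] at h2
  exact h2.symm

theorem g_inv_inv (a : G) : inv (inv a) = a :=
  (unique_inv (inv a) a ⟨op_inv a, inv_op a⟩).symm

theorem g_inv_one : (inv one : G) = one :=
  (g_eq_inv_of_op_eq_one (one_op one)).symm

theorem g_gyr_one (x y : G) : gyr x y one = one := by
  have h := gyr_hom x y one one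
  rw [one_op] at h
  have h2 : op (gyr x y one) one = op (gyr x y one) (gyr x y one) := by
    rw [op_one]; exact h
  exact (g_op_left_cancel _ h2).symm

theorem g_gyr_inv (x y a : G) : gyr x y (inv a) = inv (gyr x y a) := by
  apply g_eq_inv_of_op_eq_one
  rw [← gyr_hom, op_inv, g_gyr_one]

theorem g_gyr_eq (g h c : G) : gyr g h c = op (inv (op g h)) (op g (op h c)) := by
  rw [gyr_op g h c, g_inv_op_cancel]

theorem g_inv_op_eq (a b : G) : inv (op a b) = gyr a b (op (inv b) (inv a)) := by
  symm
  apply g_eq_inv_of_op_eq_one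
  rw [← gyr_op, g_op_inv_cancel, op_inv]

theorem g_bol (y z w : G) : op y (op z (op y w)) = op (op y (op z y)) w := by
  have h1 : gyr (inv z) (op z y) = gyr y (op z y) := by
    rw [loop (inv z) (op z y), g_inv_op_cancel]
  have h2 : gyr (inv z) (op z y) (gyr z y w) = gyr y (op z y) (gyr z y w) := by rw [h1]
  rw [g_gyr_eq (inv z), g_gyr_eq y, ← gyr_op z y w, g_inv_op_cancel z y,
    g_inv_op_cancel z (op y w), g_inv_op_cancel y w] at h2
  have h3 := congrArg (op (op y (op z y))) h2
  rw [g_op_inv_cancel] at h3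
  exact h3.symm

theorem g_gyr_gyr (a b x : G) : gyr a b (gyr b a x) = x := by
  have ht : op (op b (op (inv (op b a)) b)) a = b := by
    have h := g_bol b (inv (op b a)) a
    rw [inv_op, op_one] at h
    exact h.symm
  apply g_op_left_cancel (op a b)
  calc op (op a b) (gyr a b (gyr b a x))
      = op a (op b (gyr b a x)) := (gyr_op a b (gyr b a x)).symm
    _ = op a (op b (op (inv (op b a)) (op b (op a x)))) := by rw [g_gyr_eq b a x]
    _ = op a (op (op b (op (inv (op b a)) b)) (op a x)) := by
        rw [g_bol b (inv (op b a)) (op a x)]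
    _ = op (op a (op (op b (op (inv (op b a)) b)) a)) x :=
        g_bol a (op b (op (inv (op b a)) b)) x
    _ = op (op a b) x := by rw [ht]

def Wseq (V : Set G) : ℕ → Set G
  | 0 => V
  | n + 1 => {x | ∃ w ∈ Wseq V n, ∃ v ∈ V, x = op w v}

theorem g_Wseq_mono {V : Set G} (hV1 : one ∈ V) {n : ℕ} : Wseq V n ⊆ Wseq V (n + 1) :=
  fun w hw => ⟨w, hw, one, hV1, (op_one w).symm⟩

theorem g_Wseq_gyr {V : Set G} (hVg : ∀ x y : G, ∀ v ∈ V, gyr x y v ∈ V) :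
    ∀ n, ∀ x y : G, ∀ w ∈ Wseq V n, gyr x y w ∈ Wseq V n := by
  intro n
  induction n with
  | zero => exact hVg
  | succ n ih =>
    rintro x y w ⟨u, hu, v, hv, rfl⟩
    exact ⟨gyr x y u, ih x y u hu, gyr x y v, hVg x y v hv, gyr_hom x y u v⟩

theorem g_Wseq_op {V : Set G} (hVg : ∀ x y : G, ∀ v ∈ V, gyr x y v ∈ V) :
    ∀ n m, ∀ a ∈ Wseq V m, ∀ b ∈ Wseq V n, op a b ∈ Wseq V (m + n + 1) := by
  intro n
  induction n with
  | zero => exact fun m a ha b hb => ⟨a, ha, b, hb, rfl⟩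
  | succ n ih =>
    rintro m a ha b ⟨u, hu, v, hv, rfl⟩
    exact ⟨op a u, ih m a ha u hu, gyr a u v, hVg a u v hv, gyr_op a u v⟩

theorem g_Wseq_inv {V : Set G} (hVg : ∀ x y : G, ∀ v ∈ V, gyr x y v ∈ V)
    (hVs : ∀ v ∈ V, inv v ∈ V) (hV1 : one ∈ V) :
    ∀ n, ∀ w ∈ Wseq V n, inv w ∈ Wseq V (n + 1) := by
  intro n
  induction n with
  | zero => exact fun w hw => g_Wseq_mono hV1 (hVs w hw)
  | succ n ih =>
    rintro w ⟨u, hu, v, hv, rfl⟩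
    have h2 : op (inv v) (inv u) ∈ Wseq V (0 + (n + 1) + 1) :=
      g_Wseq_op hVg (n + 1) 0 (inv v) (hVs v hv) (inv u) (ih u hu)
    rw [Nat.zero_add] at h2
    rw [g_inv_op_eq u v]
    exact g_Wseq_gyr hVg (n + 2) u v _ h2

end Gyrogroup


open Gyrogroup
/-- In a totally disconnected locally compact strongly topological gyrogroup, every
neighborhood of the identity contains a compact open L-subgyrogroup. -/
theorem stmt15 {G : Type u} [Gyrogroup G] [TopologicalSpace G]
    [TotallyDisconnectedSpace G] [LocallyCompactSpace G]
    (hs : StronglyTopologicalGyrogroup G) :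
    ∀ U ∈ nhds (one : G), ∃ H : Set G, H ⊆ U ∧ IsCompact H ∧ IsOpen H ∧
      IsLSubgyrogroup H := by
  obtain ⟨⟨hop, hinv⟩, 𝒰, h𝒰n, h𝒰b, h𝒰g⟩ := hs
  have hone_closed : IsClosed ({one} : Set G) := by
    have h := isClosed_connectedComponent (x := (one : G))
    rwa [totallyDisconnectedSpace_iff_connectedComponent_singleton.mp ‹_› one] at h
  haveI hT2 : T2Space G := by
    rw [t2_iff_isClosed_diagonal]
    have hd : Set.diagonal G = (fun p : G × G => op (inv p.1) p.2) ⁻¹' {one} := by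
      ext ⟨x, y⟩
      simp only [Set.mem_diagonal_iff, Set.mem_preimage, Set.mem_singleton_iff]
      constructor
      · rintro rfl; exact inv_op x
      · intro h
        have h2 := g_eq_inv_of_op_eq_one h
        rw [h2, g_inv_inv]
    rw [hd]
    exact hone_closed.preimage (hop.comp ((hinv.comp continuous_fst).prodMk continuous_snd))
  intro U hU
  obtain ⟨K, hKn, hKU, hKc⟩ := LocallyCompactSpace.local_compact_nhds (one : G) U hU
  obtain ⟨Z, hZclopen, hZ1, hZK⟩ :=
    loc_compact_Haus_tot_disc_of_zero_dim.mem_nhds_iff.mp hKn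
  have hZopen : IsOpen Z := hZclopen.2
  have hZsubU : Z ⊆ U := hZK.trans hKU
  have hZcomp : IsCompact Z := hKc.of_isClosed_subset hZclopen.1 hZK
  -- find V' ∈ 𝓝 1 with Z ⊕ V' ⊆ Z
  have hzv : ∀ z ∈ Z, ∃ A ∈ 𝓝 z, ∃ B ∈ 𝓝 (one : G),
      ∀ a ∈ A, ∀ b ∈ B, op a b ∈ Z := by
    intro z hz
    have hca : ContinuousAt (fun p : G × G => op p.1 p.2) (z, one) := hop.continuousAt
    have hmem : Z ∈ 𝓝 (op z one) := hZopen.mem_nhds (by rwa [op_one])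
    have hp := hca.preimage_mem_nhds hmem
    rw [mem_nhds_prod_iff] at hp
    obtain ⟨A, hA, B, hB, hAB⟩ := hp
    exact ⟨A, hA, B, hB, fun a ha b hb => hAB (Set.mk_mem_prod ha hb)⟩
  choose! A hA B hB hAB using hzv
  obtain ⟨t, htZ, htc⟩ := hZcomp.elim_nhds_subcover A fun x hx => hA x hx
  have hV'n : (Z ∩ ⋂ x ∈ t, B x) ∈ 𝓝 (one : G) := by
    apply Filter.inter_mem (hZopen.mem_nhds hZ1)
    exact (Filter.biInter_finset_mem t).mpr fun x hx => hB x (htZ x hx)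
  have hZV' : ∀ z ∈ Z, ∀ v ∈ Z ∩ ⋂ x ∈ t, B x, op z v ∈ Z := by
    intro z hz v hv
    obtain ⟨x, hxt, hxA⟩ : ∃ x ∈ t, z ∈ A x := by
      have h := htc hz
      simpa using h
    exact hAB x (htZ x hxt) z hxA v (Set.mem_iInter₂.mp hv.2 x hxt)
  obtain ⟨U₀, hU₀𝒰, hU₀sub⟩ := h𝒰b _ hV'n
  have hU₀n : U₀ ∈ 𝓝 (one : G) := h𝒰n U₀ hU₀𝒰
  set V : Set G := U₀ ∩ inv ⁻¹' U₀ with hVdef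
  have hVn : V ∈ 𝓝 (one : G) := by
    apply Filter.inter_mem hU₀n
    apply hinv.continuousAt.preimage_mem_nhds
    rwa [g_inv_one]
  have hV1 : one ∈ V := mem_of_mem_nhds hVn
  have hVs : ∀ v ∈ V, inv v ∈ V := fun v hv =>
    ⟨hv.2, by rw [Set.mem_preimage, g_inv_inv]; exact hv.1⟩
  have hU₀g : ∀ x y : G, ∀ u ∈ U₀, gyr x y u ∈ U₀ := by
    intro x y u hu
    have h := h𝒰g U₀ hU₀𝒰 x y
    rw [← h]
    exact ⟨u, hu, rfl⟩
  have hVg : ∀ x y : G, ∀ v ∈ V, gyr x y v ∈ V := by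
    intro x y v hv
    refine ⟨hU₀g x y v hv.1, ?_⟩
    rw [Set.mem_preimage, ← g_gyr_inv]
    exact hU₀g x y (inv v) hv.2
  have hVZ : V ⊆ Z := fun v hv => (hU₀sub hv.1).1
  have hVV' : V ⊆ Z ∩ ⋂ x ∈ t, B x := fun v hv => hU₀sub hv.1
  -- the subgyrogroup
  set H : Set G := ⋃ n, Wseq V n with hHdef
  have hWZ : ∀ n, Wseq V n ⊆ Z := by
    intro n
    induction n with
    | zero => exact hVZ
    | succ n ih =>
      rintro x ⟨w, hw, v, hv, rfl⟩
      exact hZV' w (ih hw) v (hVV' hv)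
  have hHZ : H ⊆ Z := Set.iUnion_subset hWZ
  have h1H : one ∈ H := Set.mem_iUnion.mpr ⟨0, hV1⟩
  have hHop : ∀ a ∈ H, ∀ b ∈ H, op a b ∈ H := by
    intro a ha b hb
    obtain ⟨m, hm⟩ := Set.mem_iUnion.mp ha
    obtain ⟨n, hn⟩ := Set.mem_iUnion.mp hb
    exact Set.mem_iUnion.mpr ⟨m + n + 1, g_Wseq_op hVg n m a hm b hn⟩
  have hHinv : ∀ a ∈ H, inv a ∈ H := by
    intro a ha
    obtain ⟨n, hn⟩ := Set.mem_iUnion.mp ha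
    exact Set.mem_iUnion.mpr ⟨n + 1, g_Wseq_inv hVg hVs hV1 n a hn⟩
  have hHgyr : ∀ x y : G, ∀ w ∈ H, gyr x y w ∈ H := by
    intro x y w hw
    obtain ⟨n, hn⟩ := Set.mem_iUnion.mp hw
    exact Set.mem_iUnion.mpr ⟨n, g_Wseq_gyr hVg n x y w hn⟩
  have hHgyr_img : ∀ x y : G, gyr x y '' H = H := by
    intro x y
    apply Set.Subset.antisymm
    · rintro _ ⟨w, hw, rfl⟩
      exact hHgyr x y w hw
    · intro w hw
      exact ⟨gyr y x w, hHgyr y x w hw, g_gyr_gyr x y w⟩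
  -- translates of V are neighborhoods
  have hop_left : ∀ a : G, Continuous fun x : G => op a x := fun a =>
    hop.comp (continuous_const.prodMk continuous_id)
  have htrans : ∀ a : G, (fun x => op a x) '' V ∈ 𝓝 a := by
    intro a
    have himg : (fun x => op a x) '' V = (fun x => op (inv a) x) ⁻¹' V := by
      ext x
      constructor
      · rintro ⟨v, hv, rfl⟩
        show op (inv a) (op a v) ∈ V
        rw [g_inv_op_cancel]
        exact hv
      · intro hx
        exact ⟨op (inv a) x, hx, g_op_inv_cancel a x⟩
    rw [himg]
    apply (hop_left (inv a)).continuousAt.preimage_mem_nhds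
    rwa [inv_op]
  have hHopen : IsOpen H := by
    rw [isOpen_iff_mem_nhds]
    intro h hh
    obtain ⟨n, hn⟩ := Set.mem_iUnion.mp hh
    apply Filter.mem_of_superset (htrans h)
    rintro _ ⟨v, hv, rfl⟩
    exact Set.mem_iUnion.mpr ⟨n + 1, ⟨h, hn, v, hv, rfl⟩⟩
  have hHclosed : IsClosed H := by
    rw [← isOpen_compl_iff, isOpen_iff_mem_nhds]
    intro g hg
    apply Filter.mem_of_superset (htrans g)
    rintro _ ⟨v, hv, rfl⟩
    simp only [Set.mem_compl_iff]
    intro hmem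
    apply hg
    have hgeq : g = op (op g v) (gyr g v (inv v)) := by
      rw [← gyr_op, op_inv, op_one]
    rw [hgeq]
    exact hHop _ hmem _ (Set.mem_iUnion.mpr ⟨0, hVg g v (inv v) (hVs v hv)⟩)
  have hHcomp : IsCompact H := hZcomp.of_isClosed_subset hHclosed hHZ
  have hbij : ∀ a ∈ H, ∀ b ∈ H, Set.BijOn (gyr a b) H H := by
    intro a _ b _
    refine ⟨fun w hw => hHgyr a b w hw, (gyr a b).injective.injOn, ?_⟩
    intro w hw
    exact ⟨gyr b a w, hHgyr b a w hw, g_gyr_gyr a b w⟩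
  exact ⟨H, hHZ.trans hZsubU, hHcomp, hHopen,
    ⟨⟨one, h1H⟩, h1H, hHop, hHinv, hbij⟩, fun g h _ => hHgyr_img g h⟩
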